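/- Let F : ℝ^n → ℝ be differentiable with L-Lipschitz gradient, A ⊆ ℝ^n nonempty, x ∈ A, 0 < γ < 1/L, z = x - γ∇F(x), and let x⁺ ∈ A satisfy ‖x⁺ - z‖ ≤ ‖x - z‖. Then F(x⁺) ≤ F(x) - (1/(2γ) - L/2) ‖x⁺ - x‖². -/

import Mathlib

open RealInnerProductSpace

/-- Descent lemma. -/
theorem descent_aux {n : ℕ} (F : EuclideanSpace ℝ (Fin n) → ℝ)
    (G : EuclideanSpace ℝ (Fin n) → EuclideanSpace ℝ (Fin n)) (L : ℝ) (hL : 0 < L)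
    (hdiff : ∀ x, HasGradientAt F (G x) x)
    (hlip : LipschitzWith (Real.toNNReal L) G)
    (x y : EuclideanSpace ℝ (Fin n)) :
    F y ≤ F x + ⟪G x, y - x⟫ + L / 2 * ‖y - x‖ ^ 2 := by
  set v := y - x with hv
  have hGcont : Continuous G := hlip.continuous
  -- derivative of t ↦ F (x + t • v)
  have hg : ∀ t : ℝ, HasDerivAt (fun t : ℝ => F (x + t • v)) ⟪G (x + t • v), v⟫ t := by
    intro t
    have h1 : HasDerivAt (fun t : ℝ => x + t • v) v t := by
      simpa using ((hasDerivAt_id t).smul_const v).const_add x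
    have h2 := ((hdiff (x + t • v)).hasFDerivAt.comp_hasDerivAt t h1)
    simp at h2
    exact h2
  have hcont : Continuous fun t : ℝ => ⟪G (x + t • v), v⟫ := by
    exact (hGcont.comp (by continuity)).inner continuous_const
  have hint : ∀ a b : ℝ, IntervalIntegrable (fun t : ℝ => ⟪G (x + t • v), v⟫)
      MeasureTheory.volume a b := fun a b => hcont.intervalIntegrable a b
  have heq : F y - F x = ∫ t in (0:ℝ)..1, ⟪G (x + t • v), v⟫ := by
    have := intervalIntegral.integral_eq_sub_of_hasDerivAt
      (f := fun t : ℝ => F (x + t • v)) (f' := fun t : ℝ => ⟪G (x + t • v), v⟫)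
      (a := 0) (b := 1) (fun t _ => hg t) (hint 0 1)
    rw [this]
    simp [hv]
  have hbound : ∀ t ∈ Set.Icc (0:ℝ) 1,
      ⟪G (x + t • v), v⟫ ≤ ⟪G x, v⟫ + L * t * ‖v‖ ^ 2 := by
    intro t ht
    have h1 : ⟪G (x + t • v) - G x, v⟫ ≤ ‖G (x + t • v) - G x‖ * ‖v‖ :=
      real_inner_le_norm _ _
    have h2 : ‖G (x + t • v) - G x‖ ≤ L * (t * ‖v‖) := by
      have h := hlip.dist_le_mul (x + t • v) x
      rw [dist_eq_norm, dist_eq_norm] at h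
      have hx2 : x + t • v - x = t • v := by abel
      rw [hx2, norm_smul, Real.norm_eq_abs, abs_of_nonneg ht.1,
        Real.coe_toNNReal _ hL.le] at h
      linarith
    have h3 : ⟪G (x + t • v), v⟫ = ⟪G x, v⟫ + ⟪G (x + t • v) - G x, v⟫ := by
      rw [inner_sub_left]; ring
    have h4 : ‖G (x + t • v) - G x‖ * ‖v‖ ≤ L * t * ‖v‖ ^ 2 := by
      nlinarith [norm_nonneg v, norm_nonneg (G (x + t • v) - G x)]
    linarith
  have hineq : (∫ t in (0:ℝ)..1, ⟪G (x + t • v), v⟫)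
      ≤ ∫ t in (0:ℝ)..1, (⟪G x, v⟫ + L * t * ‖v‖ ^ 2) := by
    apply intervalIntegral.integral_mono_on zero_le_one (hint 0 1)
    · exact (continuous_const.add ((continuous_const.mul continuous_id).mul
        continuous_const)).intervalIntegrable 0 1
    · exact hbound
  have hval : (∫ t in (0:ℝ)..1, (⟪G x, v⟫ + L * t * ‖v‖ ^ 2))
      = ⟪G x, v⟫ + L / 2 * ‖v‖ ^ 2 := by
    have hfe : (fun t : ℝ => L * t * ‖v‖ ^ 2) = fun t : ℝ => (L * ‖v‖ ^ 2) * t := by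
      ext t; ring
    rw [intervalIntegral.integral_add (intervalIntegrable_const)
      ((Continuous.intervalIntegrable (by continuity : Continuous fun t : ℝ => L * t * ‖v‖ ^ 2) 0 1))]
    rw [show (∫ t in (0:ℝ)..1, L * t * ‖v‖ ^ 2) = ∫ t in (0:ℝ)..1, (L * ‖v‖ ^ 2) * t by
      rw [hfe], intervalIntegral.integral_const_mul, integral_id]
    simp
    ring
  rw [hval] at hineq
  linarith [heq ▸ hineq]

/-- Sufficient descent for one projected gradient step onto a possibly nonconvex set. -/
theorem stmt3 {n : ℕ} (F : EuclideanSpace ℝ (Fin n) → ℝ)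
    (G : EuclideanSpace ℝ (Fin n) → EuclideanSpace ℝ (Fin n)) (L : ℝ) (hL : 0 < L)
    (hdiff : ∀ x, HasGradientAt F (G x) x)
    (hlip : LipschitzWith (Real.toNNReal L) G)
    (A : Set (EuclideanSpace ℝ (Fin n))) (hA : A.Nonempty)
    (x : EuclideanSpace ℝ (Fin n)) (hx : x ∈ A)
    (γ : ℝ) (hγ0 : 0 < γ) (hγ1 : γ < 1 / L)
    (x' : EuclideanSpace ℝ (Fin n)) (hx' : x' ∈ A)
    (hproj : ‖x' - (x - γ • G x)‖ ≤ ‖x - (x - γ • G x)‖) :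
    F x' ≤ F x - (1 / (2 * γ) - L / 2) * ‖x' - x‖ ^ 2 := by
  have hdesc := descent_aux F G L hL hdiff hlip x x'
  set v := x' - x with hv
  -- expand projection inequality
  have hsq : ‖x' - (x - γ • G x)‖ ^ 2 ≤ ‖x - (x - γ • G x)‖ ^ 2 := by
    have := hproj
    nlinarith [norm_nonneg (x' - (x - γ • G x)), norm_nonneg (x - (x - γ • G x))]
  have h1 : x' - (x - γ • G x) = v + γ • G x := by rw [hv]; abel
  have h2 : x - (x - γ • G x) = γ • G x := sub_sub_cancel x (γ • G x)
  rw [h1, h2] at hsq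
  have hexp : ‖v + γ • G x‖ ^ 2 = ‖v‖ ^ 2 + 2 * (γ * ⟪G x, v⟫) + ‖γ • G x‖ ^ 2 := by
    rw [norm_add_sq_real, real_inner_smul_right, real_inner_comm]
    try ring
  rw [hexp] at hsq
  have hkey : ⟪G x, v⟫ ≤ -(1 / (2 * γ)) * ‖v‖ ^ 2 := by
    have h3 : ‖v‖ ^ 2 + 2 * γ * ⟪G x, v⟫ ≤ 0 := by nlinarith
    have : 2 * γ * ⟪G x, v⟫ ≤ -‖v‖ ^ 2 := by linarith
    calc ⟪G x, v⟫ = (2 * γ * ⟪G x, v⟫) / (2 * γ) := by field_simp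
      _ ≤ (-‖v‖ ^ 2) / (2 * γ) := by
          apply div_le_div_of_nonneg_right this (by linarith) |>.trans_eq rfl
      _ = -(1 / (2 * γ)) * ‖v‖ ^ 2 := by ring
  linarith
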